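/- Suppose p > 0, p ≤ x ≤ 2p, and 0 < u ≤ a·(2p - x). Then P(A·|C·p - x| ≤ u) = 1/2 + (1/(2a))·( u/p + (u/p)·ln( a·√(x·(2p - x)) / u ) ). -/

import Mathlib

open MeasureTheory ProbabilityTheory
open scoped ENNReal

noncomputable def uniformMeasure (s t : ℝ) : Measure ℝ :=
  (ENNReal.ofReal (t - s))⁻¹ • volume.restrict (Set.Icc s t)

lemma uniformMeasure_apply (s t : ℝ) (S : Set ℝ) :
    uniformMeasure s t S = (ENNReal.ofReal (t - s))⁻¹ * volume (S ∩ Set.Icc s t) := by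
  simp [uniformMeasure, Measure.restrict_apply' measurableSet_Icc]

lemma uniformMeasure_prob {s t : ℝ} (h : s < t) : IsProbabilityMeasure (uniformMeasure s t) := by
  constructor
  rw [uniformMeasure_apply, Set.univ_inter, Real.volume_Icc]
  exact ENNReal.inv_mul_cancel (by simp [h]) ENNReal.ofReal_ne_top

/-- CDF case from the proof of Theorem 1. -/
theorem gwo_cdf_case4
    {Ω : Type*} [MeasurableSpace Ω] (P : Measure Ω) [IsProbabilityMeasure P]
    (a p x : ℝ) (ha : 0 < a) (A C : Ω → ℝ) (hA : Measurable A) (hC : Measurable C)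
    (hInd : IndepFun A C P)
    (hAlaw : Measure.map A P = uniformMeasure (-a) a)
    (hClaw : Measure.map C P = uniformMeasure 0 2)
    (u : ℝ) (hp : 0 < p) (hx1 : p ≤ x) (hx2 : x ≤ 2 * p) (hu1 : 0 < u) (hu2 : u ≤ a * (2 * p - x)) :
    (P {ω | A ω * |C ω * p - x| ≤ u}).toReal
      = 1 / 2 + (1 / (2 * a)) * (u / p + (u / p) * Real.log (a * Real.sqrt (x * (2 * p - x)) / u)) := by
  have hpx : 0 < x := lt_of_lt_of_le hp hx1
  have h2px : 0 < 2 * p - x := by nlinarith [lt_of_lt_of_le hu1 hu2]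
  have hua : 0 < u / a := div_pos hu1 ha
  have hua2 : u / a ≤ 2 * p - x := by rw [div_le_iff₀ ha]; linarith [hu2]
  have huax : u / a ≤ x := le_trans hua2 (by linarith)
  set c1 : ℝ := (x - u / a) / p with hc1def
  set c2 : ℝ := (x + u / a) / p with hc2def
  have hc1p : c1 * p = x - u / a := div_mul_cancel₀ _ hp.ne'
  have hc2p : c2 * p = x + u / a := div_mul_cancel₀ _ hp.ne'
  have hc10 : 0 ≤ c1 := div_nonneg (by linarith) hp.le
  have hc12 : c1 ≤ c2 := (div_le_div_iff_of_pos_right hp).mpr (by linarith)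
  have hc22 : c2 ≤ 2 := by rw [hc2def, div_le_iff₀ hp]; linarith
  set μA := uniformMeasure (-a) a with hμA
  set μC := uniformMeasure 0 2 with hμC
  haveI : IsProbabilityMeasure μA := uniformMeasure_prob (by linarith)
  haveI : IsProbabilityMeasure μC := uniformMeasure_prob (by norm_num)
  -- the real-valued integrand
  set f : ℝ → ℝ := fun c => if |c * p - x| ≤ u / a then 1 else 1 / 2 + u / (2 * a * |c * p - x|)
    with hfdef
  have hf0 : ∀ c, 0 ≤ f c := by
    intro c
    rw [hfdef]
    dsimp only
    split_ifs with h
    · norm_num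
    · have : 0 ≤ u / (2 * a * |c * p - x|) := by positivity
      linarith
  have hf1 : ∀ c, f c ≤ 1 := by
    intro c
    rw [hfdef]
    dsimp only
    split_ifs with h
    · exact le_rfl
    · push_neg at h
      have hb : 0 < |c * p - x| := lt_trans hua h
      have : u / (2 * a * |c * p - x|) ≤ 1 / 2 := by
        rw [div_le_div_iff₀ (by positivity) (by norm_num)]
        nlinarith [(div_lt_iff₀ ha).mp h]
      linarith
  have hfmeas : Measurable f := by
    apply Measurable.ite
    · exact measurableSet_le (((measurable_id.mul_const p).sub_const x).abs) measurable_const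
    · exact measurable_const
    · exact measurable_const.add
        (measurable_const.div ((measurable_const.mul (((measurable_id.mul_const p).sub_const x).abs))))
  -- the key inner measure computation
  have hg : ∀ c : ℝ, μA {s : ℝ | s * |c * p - x| ≤ u} = ENNReal.ofReal (f c) := by
    intro c
    set b := |c * p - x| with hbdef
    have hb0 : 0 ≤ b := abs_nonneg _
    rw [hμA, uniformMeasure_apply]
    have h2a : a - -a = 2 * a := by ring
    by_cases hcase : b ≤ u / a
    · have hsub : Set.Icc (-a) a ⊆ {s : ℝ | s * b ≤ u} := by
        intro s hs
        have h1 : s * b ≤ a * b := mul_le_mul_of_nonneg_right hs.2 hb0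
        have h2 : a * b ≤ a * (u / a) := mul_le_mul_of_nonneg_left hcase ha.le
        have : a * (u / a) = u := by field_simp
        simp only [Set.mem_setOf_eq]
        linarith
      rw [Set.inter_eq_right.mpr hsub, Real.volume_Icc, h2a,
        ENNReal.inv_mul_cancel (by positivity) ENNReal.ofReal_ne_top]
      rw [hfdef]
      simp [show |c * p - x| ≤ u / a from hcase]
    · push_neg at hcase
      have hb : 0 < b := lt_trans hua hcase
      have hub : u / b < a := by
        rw [div_lt_iff₀ hb]
        exact lt_of_lt_of_le ((div_lt_iff₀ ha).mp hcase) (by rw [mul_comm])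
      have hset : {s : ℝ | s * b ≤ u} = Set.Iic (u / b) := by
        ext s
        simp [Set.mem_Iic, le_div_iff₀ hb]
      have hset2 : Set.Iic (u / b) ∩ Set.Icc (-a) a = Set.Icc (-a) (u / b) := by
        ext s
        simp only [Set.mem_inter_iff, Set.mem_Iic, Set.mem_Icc]
        exact ⟨fun ⟨h1, h2⟩ => ⟨h2.1, h1⟩, fun ⟨h1, h2⟩ => ⟨h2, h1, le_trans h2 hub.le⟩⟩
      rw [hset, hset2, Real.volume_Icc]
      have hval : u / b - -a = u / b + a := by ring
      rw [hval, h2a]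
      have heq : (1 : ℝ) / 2 + u / (2 * a * b) = (u / b + a) / (2 * a) := by
        field_simp
        ring
      have hfc : f c = 1 / 2 + u / (2 * a * b) := by
        show (if |c * p - x| ≤ u / a then (1 : ℝ) else 1 / 2 + u / (2 * a * |c * p - x|)) = _
        rw [← hbdef, if_neg (not_le.mpr hcase)]
      rw [hfc, heq, ENNReal.ofReal_div_of_pos (by positivity), mul_comm]
      exact (div_eq_mul_inv _ _).symm
  -- measurability of the product set
  have hS : MeasurableSet {q : ℝ × ℝ | q.2 * |q.1 * p - x| ≤ u} := by
    apply measurableSet_le ?_ measurable_const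
    exact measurable_snd.mul ((measurable_fst.mul_const p).sub_const x).abs
  have hmap : Measure.map (fun ω => (C ω, A ω)) P = μC.prod μA := by
    rw [(indepFun_iff_map_prod_eq_prod_map_map hC.aemeasurable hA.aemeasurable).mp hInd.symm,
      hClaw, hAlaw]
  have key : P {ω | A ω * |C ω * p - x| ≤ u}
      = ∫⁻ c, μA {s : ℝ | s * |c * p - x| ≤ u} ∂μC := by
    have h1 : P {ω | A ω * |C ω * p - x| ≤ u}
        = (μC.prod μA) {q : ℝ × ℝ | q.2 * |q.1 * p - x| ≤ u} := by
      rw [← hmap, Measure.map_apply (hC.prodMk hA) hS]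
      rfl
    rw [h1, Measure.prod_apply hS]
    rfl
  have hint : IntegrableOn f (Set.Icc (0:ℝ) 2) := by
    apply Measure.integrableOn_of_bounded (M := 1)
      (by rw [Real.volume_Icc]; exact ENNReal.ofReal_ne_top) hfmeas.aestronglyMeasurable
    filter_upwards with c
    rw [Real.norm_eq_abs, abs_of_nonneg (hf0 c)]
    exact hf1 c
  have hIcc : ∫⁻ c, ENNReal.ofReal (f c) ∂μC
      = (ENNReal.ofReal 2)⁻¹ * ENNReal.ofReal (∫ c in Set.Icc (0:ℝ) 2, f c) := by
    rw [hμC, uniformMeasure, lintegral_smul_measure]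
    norm_num
    rw [← ofReal_integral_eq_lintegral_ofReal hint (Filter.Eventually.of_forall hf0)]
  have hIcc2 : ∫ c in Set.Icc (0:ℝ) 2, f c = ∫ c in (0:ℝ)..2, f c := by
    rw [MeasureTheory.integral_Icc_eq_integral_Ioc,
      intervalIntegral.integral_of_le (by norm_num : (0:ℝ) ≤ 2)]
  have hII : ∀ l r : ℝ, 0 ≤ l → r ≤ 2 → l ≤ r → IntervalIntegrable f volume l r := by
    intro l r h0 h2 hlr
    apply IntegrableOn.intervalIntegrable
    apply hint.mono_set
    rw [Set.uIcc_of_le hlr]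
    exact Set.Icc_subset_Icc h0 h2
  have hsplit : ∫ c in (0:ℝ)..2, f c
      = (∫ c in (0:ℝ)..c1, f c) + (∫ c in c1..c2, f c) + (∫ c in c2..(2:ℝ), f c) := by
    have e1 := intervalIntegral.integral_add_adjacent_intervals
      (hII c1 c2 hc10 hc22 hc12) (hII c2 2 (le_trans hc10 hc12) le_rfl hc22)
    have e2 := intervalIntegral.integral_add_adjacent_intervals
      (hII 0 c1 le_rfl (le_trans hc12 hc22) hc10) (hII c1 2 hc10 le_rfl (le_trans hc12 hc22))
    rw [← e2, ← e1]
    ring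
  have hmid : ∫ c in c1..c2, f c = c2 - c1 := by
    have : ∫ c in c1..c2, f c = ∫ c in c1..c2, (1:ℝ) := by
      apply intervalIntegral.integral_congr
      intro c hc
      rw [Set.uIcc_of_le hc12] at hc
      have h1 : x - u / a ≤ c * p := by rw [← hc1p]; exact mul_le_mul_of_nonneg_right hc.1 hp.le
      have h2 : c * p ≤ x + u / a := by rw [← hc2p]; exact mul_le_mul_of_nonneg_right hc.2 hp.le
      show (if |c * p - x| ≤ u / a then (1:ℝ) else 1 / 2 + u / (2 * a * |c * p - x|)) = 1
      rw [if_pos (abs_le.mpr ⟨by linarith, by linarith⟩)]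
    rw [this]
    simp
  have hleft : ∫ c in (0:ℝ)..c1, f c
      = (c1 / 2 - u / (2 * a * p) * Real.log (x - c1 * p))
        - (0 / 2 - u / (2 * a * p) * Real.log (x - 0 * p)) := by
    have hcong : ∫ c in (0:ℝ)..c1, f c
        = ∫ c in (0:ℝ)..c1, (1 / 2 + u / (2 * a * (x - c * p))) := by
      apply intervalIntegral.integral_congr
      intro c hc
      rw [Set.uIcc_of_le hc10] at hc
      have hcp : u / a ≤ x - c * p := by
        have := mul_le_mul_of_nonneg_right hc.2 hp.le
        rw [hc1p] at this
        linarith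
      have habs : |c * p - x| = x - c * p := by rw [abs_of_nonpos (by linarith)]; ring
      show (if |c * p - x| ≤ u / a then (1:ℝ) else 1 / 2 + u / (2 * a * |c * p - x|)) = _
      rw [habs]
      rcases eq_or_lt_of_le hcp with h | h
      · rw [if_pos h.ge]
        show (1:ℝ) = 1 / 2 + u / (2 * a * (x - c * p))
        rw [← h]
        field_simp
        ring
      · rw [if_neg (not_le.mpr h)]
    rw [hcong]
    apply intervalIntegral.integral_eq_sub_of_hasDerivAt
      (f := fun c => c / 2 - u / (2 * a * p) * Real.log (x - c * p))
    · intro c hc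
      rw [Set.uIcc_of_le hc10] at hc
      have hcp : u / a ≤ x - c * p := by
        have := mul_le_mul_of_nonneg_right hc.2 hp.le
        rw [hc1p] at this
        linarith
      have hpos : 0 < x - c * p := lt_of_lt_of_le hua hcp
      have h1 : HasDerivAt (fun c : ℝ => x - c * p) (-p) c := by
        simpa using ((hasDerivAt_id c).mul_const p).const_sub x
      have h2 : HasDerivAt (fun c : ℝ => Real.log (x - c * p)) (-p / (x - c * p)) c :=
        h1.log hpos.ne'
      have h3 := ((hasDerivAt_id c).div_const 2).sub (h2.const_mul (u / (2 * a * p)))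
      convert h3 using 1
      · rfl
      rw [div_mul_div_comm, mul_neg, neg_div, sub_neg_eq_add, mul_comm u p,
        show 2 * a * p * (x - c * p) = p * (2 * a * (x - c * p)) by ring, mul_div_mul_left _ _ hp.ne']
    · apply ContinuousOn.intervalIntegrable
      apply ContinuousOn.add continuousOn_const
      apply ContinuousOn.div continuousOn_const (by fun_prop)
      intro c hc
      rw [Set.uIcc_of_le hc10] at hc
      have hcp : u / a ≤ x - c * p := by
        have := mul_le_mul_of_nonneg_right hc.2 hp.le
        rw [hc1p] at this
        linarith
      have hpos : 0 < x - c * p := lt_of_lt_of_le hua hcp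
      positivity
  have hright : ∫ c in c2..(2:ℝ), f c
      = (2 / 2 + u / (2 * a * p) * Real.log (2 * p - x))
        - (c2 / 2 + u / (2 * a * p) * Real.log (c2 * p - x)) := by
    have hcong : ∫ c in c2..(2:ℝ), f c
        = ∫ c in c2..(2:ℝ), (1 / 2 + u / (2 * a * (c * p - x))) := by
      apply intervalIntegral.integral_congr
      intro c hc
      rw [Set.uIcc_of_le hc22] at hc
      have hcp : u / a ≤ c * p - x := by
        have := mul_le_mul_of_nonneg_right hc.1 hp.le
        rw [hc2p] at this
        linarith
      have habs : |c * p - x| = c * p - x := abs_of_nonneg (by linarith)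
      show (if |c * p - x| ≤ u / a then (1:ℝ) else 1 / 2 + u / (2 * a * |c * p - x|)) = _
      rw [habs]
      rcases eq_or_lt_of_le hcp with h | h
      · rw [if_pos h.ge]
        show (1:ℝ) = 1 / 2 + u / (2 * a * (c * p - x))
        rw [← h]
        field_simp
        ring
      · rw [if_neg (not_le.mpr h)]
    rw [hcong]
    have h22 : (2:ℝ) / 2 + u / (2 * a * p) * Real.log (2 * p - x)
        = 2 / 2 + u / (2 * a * p) * Real.log (2 * p - x) := rfl
    apply intervalIntegral.integral_eq_sub_of_hasDerivAt (f := fun c =>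
      c / 2 + u / (2 * a * p) * Real.log (c * p - x))
    · intro c hc
      rw [Set.uIcc_of_le hc22] at hc
      have hcp : u / a ≤ c * p - x := by
        have := mul_le_mul_of_nonneg_right hc.1 hp.le
        rw [hc2p] at this
        linarith
      have hpos : 0 < c * p - x := lt_of_lt_of_le hua hcp
      have h1 : HasDerivAt (fun c : ℝ => c * p - x) p c := by
        simpa using ((hasDerivAt_id c).mul_const p).sub_const x
      have h2 : HasDerivAt (fun c : ℝ => Real.log (c * p - x)) (p / (c * p - x)) c :=
        h1.log hpos.ne'
      have h3 := ((hasDerivAt_id c).div_const 2).add (h2.const_mul (u / (2 * a * p)))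
      convert h3 using 1
      · rfl
      rw [div_mul_div_comm, mul_comm u p,
        show 2 * a * p * (c * p - x) = p * (2 * a * (c * p - x)) by ring, mul_div_mul_left _ _ hp.ne']
    · apply ContinuousOn.intervalIntegrable
      apply ContinuousOn.add continuousOn_const
      apply ContinuousOn.div continuousOn_const (by fun_prop)
      intro c hc
      rw [Set.uIcc_of_le hc22] at hc
      have hcp : u / a ≤ c * p - x := by
        have := mul_le_mul_of_nonneg_right hc.1 hp.le
        rw [hc2p] at this
        linarith
      have hpos : 0 < c * p - x := lt_of_lt_of_le hua hcp
      positivity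
  -- log identities
  have hL1 : Real.log (u / a) = Real.log u - Real.log a := Real.log_div hu1.ne' ha.ne'
  have hL2 : Real.log (a * Real.sqrt (x * (2 * p - x)) / u)
      = Real.log a + (Real.log x + Real.log (2 * p - x)) / 2 - Real.log u := by
    rw [Real.log_div (by positivity) hu1.ne',
      Real.log_mul ha.ne' (by positivity),
      Real.log_sqrt (by positivity), Real.log_mul hpx.ne' h2px.ne']
  have hval1 : x - c1 * p = u / a := by rw [hc1p]; ring
  have hval2 : c2 * p - x = u / a := by rw [hc2p]; ring
  have hval3 : x - 0 * p = x := by ring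
  have hE : ∫ c in Set.Icc (0:ℝ) 2, f c
      = 2 * (1 / 2 + (1 / (2 * a)) * (u / p
        + (u / p) * Real.log (a * Real.sqrt (x * (2 * p - x)) / u))) := by
    have hcc : c2 - c1 = 2 * u / (a * p) := by
      rw [hc1def, hc2def]
      field_simp
      ring
    rw [hIcc2, hsplit, hleft, hmid, hright, hval1, hval2, hval3, hL1, hL2]
    linear_combination ((1:ℝ) / 2) * hcc
  have hE0 : 0 ≤ ∫ c in Set.Icc (0:ℝ) 2, f c :=
    setIntegral_nonneg measurableSet_Icc fun c _ => hf0 c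
  rw [key]
  simp_rw [hg]
  rw [hIcc, ENNReal.toReal_mul, ENNReal.toReal_inv, ENNReal.toReal_ofReal (by norm_num : (0:ℝ) ≤ 2),
    ENNReal.toReal_ofReal hE0, hE]
  ring
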